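/- Let F be a measure-preserving C¹ map of 𝕋^d, U_F f = f∘F the Koopman operator, G_ε a noise operator satisfying ‖G_ε f − f‖ ≤ C ε^β ‖∇f‖_∞ for C¹ functions f, and suppose ‖∇(G_ε f)‖_∞ ≤ ‖∇f‖_∞. Then for every f ∈ C¹₀(𝕋^d) with ‖f‖_{L²} = 1, ‖(G_ε U_F)^n f‖ ≥ 1 − C ε^β ‖∇f‖_∞ Σ_{m=1}^n ‖DF‖_∞^m for all n ∈ ℕ. -/

import Mathlib

open MeasureTheory
open scoped NNReal

noncomputable section

/-- The d-dimensional torus 𝕋^d. -/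
abbrev Torus (d : ℕ) := Fin d → AddCircle (1 : ℝ)

lemma continuous_memℒp2 {d : ℕ} {h : Torus d → ℂ} (hc : Continuous h) :
    MemLp h 2 (volume : Measure (Torus d)) := by
  obtain ⟨R, hR⟩ := (isCompact_range hc).isBounded.exists_norm_le
  exact MemLp.of_bound hc.aestronglyMeasurable R (ae_of_all _ fun x => hR _ ⟨x, rfl⟩)

/-- Let F be a measure-preserving C¹ map of 𝕋^d (with `‖DF‖_∞ ≤ L`, i.e. F is
L-Lipschitz), `U_F f = f ∘ F` the Koopman operator, and G_ε a noise operator with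
`‖G_ε h − h‖_{L²} ≤ C ε^β ‖∇h‖_∞` and `‖∇(G_ε h)‖_∞ ≤ ‖∇h‖_∞` on C¹ functions
(gradient sup-norms realized as Lipschitz constants).  Then for every mean-zero C¹
function f with ‖f‖_{L²} = 1 and `‖∇f‖_∞ ≤ N`,
`‖(G_ε U_F)^n f‖ ≥ 1 − C ε^β N Σ_{m=1}^n L^m` for all n. -/
theorem stmt13 (d : ℕ) (F : Torus d → Torus d)
    (hF : MeasurePreserving F volume volume)
    (L : ℝ≥0) (hFL : LipschitzWith L F)
    (G : (Torus d → ℂ) → (Torus d → ℂ))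
    (C ε β : ℝ) (hC : 0 < C) (hε : 0 < ε) (hβ : 0 < β)
    (hGnoise : ∀ (h : Torus d → ℂ) (K : ℝ≥0), LipschitzWith K h →
      (eLpNorm (fun x => G h x - h x) 2 volume).toReal ≤ C * ε ^ β * K)
    (hGlip : ∀ (h : Torus d → ℂ) (K : ℝ≥0), LipschitzWith K h →
      LipschitzWith K (G h))
    (f : Torus d → ℂ) (N : ℝ≥0) (hfl : LipschitzWith N f)
    (hf0 : (∫ x, f x) = 0) (hfn : (eLpNorm f 2 volume).toReal = 1) (n : ℕ) :
    1 - C * ε ^ β * N * ∑ m ∈ Finset.Icc 1 n, (L : ℝ) ^ m ≤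
      (eLpNorm ((fun h => G (h ∘ F))^[n] f) 2 volume).toReal := by
  set T : (Torus d → ℂ) → (Torus d → ℂ) := fun h => G (h ∘ F) with hT
  -- key single-step estimate
  have key : ∀ (h : Torus d → ℂ) (K : ℝ≥0), LipschitzWith K h →
      (eLpNorm h 2 volume).toReal - C * ε ^ β * (K * L) ≤
        (eLpNorm (T h) 2 volume).toReal := by
    intro h K hK
    have hKF : LipschitzWith (K * L) (h ∘ F) := hK.comp hFL
    have hGKF : LipschitzWith (K * L) (G (h ∘ F)) := hGlip _ _ hKF
    have hmem1 : MemLp (h ∘ F) 2 (volume : Measure (Torus d)) :=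
      continuous_memℒp2 hKF.continuous
    have hmem2 : MemLp (G (h ∘ F)) 2 (volume : Measure (Torus d)) :=
      continuous_memℒp2 hGKF.continuous
    have hdiff : MemLp (fun x => G (h ∘ F) x - (h ∘ F) x) 2
        (volume : Measure (Torus d)) := hmem2.sub hmem1
    have heq : eLpNorm (h ∘ F) 2 volume = eLpNorm h 2 volume :=
      eLpNorm_comp_measurePreserving hK.continuous.aestronglyMeasurable hF
    have htri : eLpNorm (h ∘ F) 2 volume ≤
        eLpNorm (fun x => G (h ∘ F) x - (h ∘ F) x) 2 volume +
          eLpNorm (G (h ∘ F)) 2 volume := by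
      have hfe : (h ∘ F) = fun x => ((h ∘ F) x - G (h ∘ F) x) + G (h ∘ F) x := by
        funext x; ring
      have h1 : MemLp (fun x => (h ∘ F) x - G (h ∘ F) x) 2
          (volume : Measure (Torus d)) := hmem1.sub hmem2
      calc eLpNorm (h ∘ F) 2 volume
          = eLpNorm (fun x => ((h ∘ F) x - G (h ∘ F) x) + G (h ∘ F) x) 2 volume := by
            rw [← hfe]
        _ ≤ eLpNorm (fun x => (h ∘ F) x - G (h ∘ F) x) 2 volume +
            eLpNorm (G (h ∘ F)) 2 volume :=
            eLpNorm_add_le h1.aestronglyMeasurable hmem2.aestronglyMeasurable (by norm_num)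
        _ = eLpNorm (fun x => G (h ∘ F) x - (h ∘ F) x) 2 volume +
            eLpNorm (G (h ∘ F)) 2 volume := by
            congr 1
            have he : (fun x => (h ∘ F) x - G (h ∘ F) x) =
                -(fun x => G (h ∘ F) x - (h ∘ F) x) := by
              funext x; simp [neg_sub]
            rw [he, eLpNorm_neg]
    have htoReal : (eLpNorm h 2 volume).toReal ≤
        (eLpNorm (fun x => G (h ∘ F) x - (h ∘ F) x) 2 volume).toReal +
          (eLpNorm (G (h ∘ F)) 2 volume).toReal := by
      rw [← heq]
      rw [← ENNReal.toReal_add hdiff.eLpNorm_ne_top hmem2.eLpNorm_ne_top]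
      exact ENNReal.toReal_mono (by
        exact ENNReal.add_ne_top.2 ⟨hdiff.eLpNorm_ne_top, hmem2.eLpNorm_ne_top⟩) htri
    have hn := hGnoise (h ∘ F) (K * L) hKF
    have : (C : ℝ) * ε ^ β * ((K * L : ℝ≥0) : ℝ) = C * ε ^ β * (K * L) := by
      push_cast; ring
    rw [this] at hn
    linarith
  -- induction
  have main : ∀ n : ℕ, LipschitzWith (N * L ^ n) (T^[n] f) ∧
      1 - C * ε ^ β * N * ∑ m ∈ Finset.Icc 1 n, (L : ℝ) ^ m ≤
        (eLpNorm (T^[n] f) 2 volume).toReal := by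
    intro n
    induction n with
    | zero =>
        refine ⟨by simpa using hfl, ?_⟩
        simp [hfn]
    | succ k ih =>
      obtain ⟨ihlip, ihnorm⟩ := ih
      have hlip' : LipschitzWith (N * L ^ (k + 1)) (T^[k + 1] f) := by
        rw [Function.iterate_succ_apply']
        have : LipschitzWith (N * L ^ k * L) (T (T^[k] f)) :=
          hGlip _ _ (ihlip.comp hFL)
        convert this using 1
        rw [pow_succ, mul_assoc]
      refine ⟨hlip', ?_⟩
      have hstep := key (T^[k] f) (N * L ^ k) ihlip
      rw [← Function.iterate_succ_apply' T k f] at hstep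
      have hcast : ((N * L ^ k : ℝ≥0) : ℝ) * (L : ℝ) = (N : ℝ) * (L : ℝ) ^ (k + 1) := by
        push_cast; ring
      rw [mul_assoc, hcast] at hstep
      simp only [Nat.succ_eq_add_one] at hstep
      have hsum : ∑ m ∈ Finset.Icc 1 (k + 1), (L : ℝ) ^ m =
          (∑ m ∈ Finset.Icc 1 k, (L : ℝ) ^ m) + (L : ℝ) ^ (k + 1) := by
        rw [← Finset.sum_Icc_succ_top (by omega : 1 ≤ k + 1)]
      rw [hsum]
      have hCε : 0 ≤ C * ε ^ β := by positivity
      nlinarith [hstep, ihnorm]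
  have := (main n).2
  linarith
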